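/- Let S₄ be the symmetric group on a four-element set X₄, let X₆ be the set of two-element subsets of X₄, and X₃ the quotient of X₆ by complementation. Then the sequence of Z[S₄]-modules 0 → Z → Z[X₄] ⊕ Z → Z[X₆] ⊕ Z → Z[X₃] → 0 is exact, where the first map sends 1 to (ΣX₄, -2); the middle map sends (x, n) to (U₁₁(x) + n·ΣX₆, ε(x) + 2n) with U₁₁ sending each element of X₄ to the sum of the three two-element subsets containing it and ε the augmentation; and the last map sends (y, n) to q(y) - n·ΣX₃ with q induced by the quotient X₆ → X₃. -/
import Mathlib


open Finset

/-- `X₆`: the two-element subsets of `X₄ = Fin 4`. -/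
abbrev X6 : Type := {s : Finset (Fin 4) // s.card = 2}

/-- Complementation involution on `X₆`. -/
def complX6 (s : X6) : X6 :=
  ⟨s.1ᶜ, by simp [Finset.card_compl, s.2]⟩

/-- The equivalence relation on `X₆` identifying a subset with its complement. -/
instance X6setoid : Setoid X6 where
  r s t := t = s ∨ t = complX6 s
  iseqv := by
    constructor
    · exact fun s => Or.inl rfl
    · rintro s t (rfl | rfl)
      · exact Or.inl rfl
      · exact Or.inr (Subtype.ext (by simp [complX6]))
    · rintro s t u (rfl | rfl) (h | h)
      · exact Or.inl h
      · exact Or.inr h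
      · subst h; exact Or.inr rfl
      · subst h; exact Or.inl (Subtype.ext (by simp [complX6]))

instance : DecidableRel (X6setoid).r := fun s t =>
  inferInstanceAs (Decidable (t = s ∨ t = complX6 s))

/-- `X₃ = X₆ / ∗`, the quotient of `X₆` by complementation. -/
abbrev X3 : Type := Quotient X6setoid

instance : DecidableEq X3 := fun a b =>
  Quotient.decidableEq (d := fun s t =>
    inferInstanceAs (Decidable (t = s ∨ t = complX6 s))) a b

/- Auxiliary material -/

lemma complX6_invol (s : X6) : complX6 (complX6 s) = s :=
  Subtype.ext (by simp [complX6])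

lemma ne_complX6 (s : X6) : s ≠ complX6 s := by
  intro h
  have h2 : s.1.card = 2 := s.2
  have : s.1 = s.1ᶜ := congrArg Subtype.val h
  have hne : s.1.Nonempty := Finset.card_pos.mp (by omega)
  obtain ⟨x, hx⟩ := hne
  have : x ∈ s.1ᶜ := this ▸ hx
  simp [Finset.mem_compl] at this
  exact this hx

lemma quotX3_eq_iff (s t : X6) : (⟦s⟧ : X3) = ⟦t⟧ ↔ (s = t ∨ s = complX6 t) := by
  rw [Quotient.eq]
  show (t = s ∨ t = complX6 s) ↔ _
  constructor
  · rintro (rfl | rfl)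
    · exact Or.inl rfl
    · exact Or.inr (complX6_invol s).symm
  · rintro (rfl | rfl)
    · exact Or.inl rfl
    · exact Or.inr (complX6_invol t).symm

lemma sum_class (f : X6 → ℤ) (s₀ : X6) :
    (∑ s : X6, if (⟦s⟧ : X3) = ⟦s₀⟧ then f s else 0) = f s₀ + f (complX6 s₀) := by
  have key : ∀ s : X6, (if (⟦s⟧ : X3) = ⟦s₀⟧ then f s else 0)
      = (if s = s₀ then f s else 0) + (if s = complX6 s₀ then f s else 0) := by
    intro s
    simp only [quotX3_eq_iff]
    by_cases h1 : s = s₀ <;> by_cases h2 : s = complX6 s₀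
    · exact absurd (h1.symm.trans h2) (ne_complX6 s₀)
    · subst h1; simp [h2]
    · subst h2; simp [h1]
    · simp [h1, h2]
  rw [Finset.sum_congr rfl (fun s _ => key s), Finset.sum_add_distrib]
  simp

def p01 : X6 := ⟨{0, 1}, by decide⟩
def p02 : X6 := ⟨{0, 2}, by decide⟩
def p03 : X6 := ⟨{0, 3}, by decide⟩
def p12 : X6 := ⟨{1, 2}, by decide⟩
def p13 : X6 := ⟨{1, 3}, by decide⟩
def p23 : X6 := ⟨{2, 3}, by decide⟩

lemma X6_cases (s : X6) :
    s = p01 ∨ s = p02 ∨ s = p03 ∨ s = p12 ∨ s = p13 ∨ s = p23 := by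
  revert s; decide

lemma compl_p01 : complX6 p01 = p23 := by decide
lemma compl_p02 : complX6 p02 = p13 := by decide
lemma compl_p03 : complX6 p03 = p12 := by decide

lemma sum_pair_01 (f : Fin 4 → ℤ) : ∑ i ∈ p01.1, f i = f 0 + f 1 :=
  Finset.sum_pair (by decide)
lemma sum_pair_02 (f : Fin 4 → ℤ) : ∑ i ∈ p02.1, f i = f 0 + f 2 :=
  Finset.sum_pair (by decide)
lemma sum_pair_03 (f : Fin 4 → ℤ) : ∑ i ∈ p03.1, f i = f 0 + f 3 :=
  Finset.sum_pair (by decide)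
lemma sum_pair_12 (f : Fin 4 → ℤ) : ∑ i ∈ p12.1, f i = f 1 + f 2 :=
  Finset.sum_pair (by decide)
lemma sum_pair_13 (f : Fin 4 → ℤ) : ∑ i ∈ p13.1, f i = f 1 + f 3 :=
  Finset.sum_pair (by decide)
lemma sum_pair_23 (f : Fin 4 → ℤ) : ∑ i ∈ p23.1, f i = f 2 + f 3 :=
  Finset.sum_pair (by decide)

/-- Exactness of the quadruple `0 → ℤ → ℤ[X₄]⊕ℤ → ℤ[X₆]⊕ℤ → ℤ[X₃] → 0` of
permutation `ℤ[S₄]`-modules: first map `1 ↦ (ΣX₄, -2)`; middle map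
`(x,n) ↦ (U₁₁(x) + n·ΣX₆, ε(x) + 2n)` where `U₁₁` sends a point to the sum of
the three `2`-subsets containing it; last map `(y,n) ↦ q(y) - n·ΣX₃`. -/
theorem stmt_6
    (d₀ : ℤ → (Fin 4 → ℤ) × ℤ)
    (hd₀ : ∀ n : ℤ, d₀ n = (fun _ => n, -2 * n))
    (d₁ : (Fin 4 → ℤ) × ℤ → (X6 → ℤ) × ℤ)
    (hd₁ : ∀ x : (Fin 4 → ℤ) × ℤ, d₁ x =
      (fun s => (∑ i ∈ s.1, x.1 i) + x.2, (∑ i, x.1 i) + 2 * x.2))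
    (d₂ : (X6 → ℤ) × ℤ → (X3 → ℤ))
    (hd₂ : ∀ y : (X6 → ℤ) × ℤ, d₂ y =
      fun t => (∑ s : X6, if (⟦s⟧ : X3) = t then y.1 s else 0) - y.2) :
    Function.Injective d₀ ∧ Function.Exact d₀ d₁ ∧ Function.Exact d₁ d₂ ∧
      Function.Surjective d₂ := by
  have fin4_cases : ∀ i : Fin 4, i = 0 ∨ i = 1 ∨ i = 2 ∨ i = 3 := by decide
  refine ⟨?_, ?_, ?_, ?_⟩
  · -- injectivity of d₀
    intro m n h
    have h2 := congrArg Prod.snd h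
    rw [hd₀ m, hd₀ n] at h2
    simp only at h2
    omega
  · -- exactness at ℤ[X₄]⊕ℤ
    intro x
    constructor
    · intro h
      rw [hd₁ x] at h
      have h1 : ∀ s : X6, (∑ i ∈ s.1, x.1 i) + x.2 = 0 := by
        intro s
        have := congrFun (congrArg Prod.fst h) s
        simpa using this
      have h2 : (∑ i, x.1 i) + 2 * x.2 = 0 := by
        have := congrArg Prod.snd h
        simpa using this
      rw [Fin.sum_univ_four] at h2
      have e01 := h1 p01; rw [sum_pair_01] at e01
      have e02 := h1 p02; rw [sum_pair_02] at e02
      have e03 := h1 p03; rw [sum_pair_03] at e03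
      refine ⟨x.1 0, ?_⟩
      rw [hd₀]
      refine Prod.ext (funext fun i => ?_) ?_
      · show x.1 0 = x.1 i
        rcases fin4_cases i with rfl | rfl | rfl | rfl <;> omega
      · show -2 * x.1 0 = x.2
        omega
    · rintro ⟨n, rfl⟩
      rw [hd₀, hd₁]
      refine Prod.ext (funext fun s => ?_) ?_
      · show (∑ _i ∈ s.1, n) + -2 * n = 0
        rw [Finset.sum_const, s.2, nsmul_eq_mul]
        push_cast
        ring
      · show (∑ _i : Fin 4, n) + 2 * (-2 * n) = 0
        rw [Fin.sum_univ_four]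
        ring
  · -- exactness at ℤ[X₆]⊕ℤ
    intro y
    constructor
    · intro h
      rw [hd₂ y] at h
      have hcl : ∀ s₀ : X6, y.1 s₀ + y.1 (complX6 s₀) = y.2 := by
        intro s₀
        have := congrFun h (⟦s₀⟧ : X3)
        rw [sum_class] at this
        simp only [Pi.zero_apply] at this
        linarith
      have c1 := hcl p01; rw [compl_p01] at c1
      have c2 := hcl p02; rw [compl_p02] at c2
      have c3 := hcl p03; rw [compl_p03] at c3
      set a01 := y.1 p01 with ha01
      set a02 := y.1 p02 with ha02
      set a03 := y.1 p03 with ha03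
      set a12 := y.1 p12 with ha12
      set a13 := y.1 p13 with ha13
      set a23 := y.1 p23 with ha23
      set v : Fin 4 → ℤ := ![0, a12 - a02, a12 - a01, a03 - a01 - a02 + a12] with hv
      have hv0 : v 0 = 0 := rfl
      have hv1 : v 1 = a12 - a02 := rfl
      have hv2 : v 2 = a12 - a01 := rfl
      have hv3 : v 3 = a03 - a01 - a02 + a12 := rfl
      refine ⟨(v, a01 + a02 - a12), ?_⟩
      rw [hd₁]
      refine Prod.ext (funext fun s => ?_) ?_
      · show (∑ i ∈ s.1, v i) + (a01 + a02 - a12) = y.1 s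
        rcases X6_cases s with rfl | rfl | rfl | rfl | rfl | rfl
        · rw [sum_pair_01, hv0, hv1]; linarith
        · rw [sum_pair_02, hv0, hv2]; linarith
        · rw [sum_pair_03, hv0, hv3]; linarith
        · rw [sum_pair_12, hv1, hv2]; linarith
        · rw [sum_pair_13, hv1, hv3]; linarith
        · rw [sum_pair_23, hv2, hv3]; linarith
      · show (∑ i, v i) + 2 * (a01 + a02 - a12) = y.2
        rw [Fin.sum_univ_four, hv0, hv1, hv2, hv3]
        linarith
    · rintro ⟨x, rfl⟩
      rw [hd₁ x, hd₂]
      funext t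
      induction t using Quotient.ind with
      | _ s₀ =>
        show (∑ s : X6, if (⟦s⟧ : X3) = ⟦s₀⟧ then (∑ i ∈ s.1, x.1 i) + x.2 else 0)
            - ((∑ i, x.1 i) + 2 * x.2) = 0
        rw [sum_class (fun s => (∑ i ∈ s.1, x.1 i) + x.2) s₀]
        have hsum : (∑ i ∈ s₀.1, x.1 i) + (∑ i ∈ s₀.1ᶜ, x.1 i) = ∑ i, x.1 i :=
          Finset.sum_add_sum_compl s₀.1 x.1
        have hc : (complX6 s₀).1 = s₀.1ᶜ := rfl
        rw [hc]
        linarith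
  · -- surjectivity of d₂
    intro z
    refine ⟨(fun s => if (0 : Fin 4) ∈ s.1 then z ⟦s⟧ else 0, 0), ?_⟩
    rw [hd₂]
    funext t
    induction t using Quotient.ind with
    | _ s₀ =>
      show (∑ s : X6, if (⟦s⟧ : X3) = ⟦s₀⟧ then
          (if (0 : Fin 4) ∈ s.1 then z ⟦s⟧ else 0) else 0) - 0 = z ⟦s₀⟧
      rw [sum_class]
      have hq : (⟦complX6 s₀⟧ : X3) = ⟦s₀⟧ :=
        Quotient.sound (Or.inr (complX6_invol s₀).symm)
      by_cases h0 : (0 : Fin 4) ∈ s₀.1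
      · have h0' : (0 : Fin 4) ∉ (complX6 s₀).1 := by
          simp [complX6, h0]
        simp [h0, h0']
      · have h0' : (0 : Fin 4) ∈ (complX6 s₀).1 := by
          simp [complX6, h0]
        simp [h0, h0', hq]
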